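/- For each 0 ≤ ε < ε₀ the series S_ε(ω,x) = −Σ_{j=1}^∞ τ_ε'(θ^{−j}ω, G_ε^{(j)}(θ^{−j}ω,x)) · dG_ε^{(j)}(θ^{−j}ω,x)/dx converges ℙ-almost surely uniformly in x ∈ ℝ, satisfies esssup_ω sup_x |S_ε(ω,x)| ≤ C_τ Σ_{j=1}^∞ λ^{−j}, and solves the cohomological equation S_ε(ω, G_ε(ω,x)) = E_ε'(ω, G_ε(ω,x)) S_ε(θω, x) + τ_ε'(ω, G_ε(ω,x)) for all x ∈ ℝ, ℙ-almost surely; consequently the lifted map F̃(ε;ω) sends (x, S_ε(θω,x)) to (x', S_ε(ω,x')) with x' = G_ε(ω,x), and more generally F̃^{(n)}(ε;ω)(x, S_ε(θⁿω,x)) = (G_ε^{(n)}(ω,x), S_ε(ω, G_ε^{(n)}(ω,x))). -/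

import Mathlib

open MeasureTheory Filter Topology
open scoped ENNReal

noncomputable section

namespace RPE

variable {Ω : Type*}

/-! ## The circle and the torus -/

/-- The circle `S¹ = ℝ/ℤ`. -/
abbrev S1 := AddCircle (1 : ℝ)

/-- The torus `𝕋² = S¹ × S¹`. -/
abbrev T2 := S1 × S1

instance : Fact ((0:ℝ) < 1) := ⟨one_pos⟩

/-- The representative in `[0,1)` of a point of the circle. -/
def lift01 (x : S1) : ℝ := (AddCircle.equivIco 1 0 x).1

/-- The circle map induced by a lift `F : ℝ → ℝ`. -/
def circMap (F : ℝ → ℝ) (x : S1) : S1 := (F (lift01 x) : ℝ)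

/-- The skew product `f(x,s) = (E x mod 1, s + τ(x)/(2π) mod 1)` defined through lifts. -/
def skewMap (E τ : ℝ → ℝ) (z : T2) : T2 :=
  ((E (lift01 z.1) : ℝ), z.2 + ((τ (lift01 z.1) / (2 * Real.pi) : ℝ) : S1))

/-- The fiber iterates `f^{(n)}(ω) = f(θ^{n-1}ω) ∘ ⋯ ∘ f(ω)` of the random skew product. -/
def iterSkew (θ : Ω → Ω) (E τ : Ω → ℝ → ℝ) : ℕ → Ω → T2 → T2
  | 0, _, z => z
  | n + 1, ω, z => iterSkew θ E τ n (θ ω) (skewMap (E ω) (τ ω) z)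

/-- `C^∞` functions on the torus, via doubly periodic smooth lifts. -/
def SmoothT2 (φ : T2 → ℂ) : Prop :=
  ∃ Φ : ℝ × ℝ → ℂ, ContDiff ℝ (⊤ : ℕ∞) Φ ∧
    (∀ x s : ℝ, Φ (x + 1, s) = Φ (x, s) ∧ Φ (x, s + 1) = Φ (x, s)) ∧
    ∀ x s : ℝ, φ ((x : S1), (s : S1)) = Φ (x, s)

/-! ## Cocycles and transfer operators (on lifts) -/

/-- Forward cocycle of (lifted) expanding maps: `E^{(n)}(ω) = E(θ^{n-1}ω) ∘ ⋯ ∘ E(ω)`. -/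
def iterE (θ : Ω → Ω) (E : Ω → ℝ → ℝ) : ℕ → Ω → ℝ → ℝ
  | 0, _, x => x
  | n + 1, ω, x => iterE θ E n (θ ω) (E ω x)

/-- Birkhoff-type sum `τ^{(n)}(ω,x) = ∑_{j<n} τ(θ^jω, E^{(j)}(ω,x))`. -/
def iterTau (θ : Ω → Ω) (E τ : Ω → ℝ → ℝ) (n : ℕ) (ω : Ω) (x : ℝ) : ℝ :=
  ∑ j ∈ Finset.range n, τ (θ^[j] ω) (iterE θ E j ω x)

/-- The composition (Koopman) operator `M_{ν,n}(ω)φ = e^{iν τ^{(n)}(ω,·)} φ ∘ E^{(n)}(ω)`. -/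
def transferM (θ : Ω → Ω) (E τ : Ω → ℝ → ℝ) (ν : ℤ) (n : ℕ) (ω : Ω) (φ : ℝ → ℂ) (x : ℝ) : ℂ :=
  Complex.exp (Complex.I * ν * (iterTau θ E τ n ω x)) * φ (iterE θ E n ω x)

/-- The reduced Perron–Frobenius transfer operator
`M*_{ν,n}(ω)φ(x) = ∑_{E^{(n)}(ω,y)=x} e^{-iν τ^{(n)}(ω,y)} φ(y)/(dE^{(n)}(ω,y)/dy)`,
realized on lifts: the preimages of `x` are `(E^{(n)}(ω))^{-1}(x+a)`, `a = 0,…,kⁿ-1`. -/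
def transferStar (k : ℕ) (θ : Ω → Ω) (E τ : Ω → ℝ → ℝ) (ν : ℤ) (n : ℕ) (ω : Ω)
    (φ : ℝ → ℂ) (x : ℝ) : ℂ :=
  ∑ a ∈ Finset.range (k ^ n),
    Complex.exp (-(Complex.I * ν * iterTau θ E τ n ω (Function.invFun (iterE θ E n ω) (x + a))))
      * φ (Function.invFun (iterE θ E n ω) (x + a))
      / Complex.ofReal (deriv (iterE θ E n ω) (Function.invFun (iterE θ E n ω) (x + a)))

/-! ## Sobolev norms via Fourier coefficients -/

/-- Fourier coefficient of a 1-periodic function, at frequency `ξ = 2πn`. -/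
def fourierC (u : ℝ → ℂ) (n : ℤ) : ℂ :=
  ∫ x in (0:ℝ)..1, u x * Complex.exp (-(2 * Real.pi * n * x) * Complex.I)

/-- Squared Sobolev norm `‖u‖²_{(m)} = ∑_{ξ∈2πℤ} (1+|ξ|²)^m |û(ξ)|²`. -/
def sobNormSq (m : ℕ) (u : ℝ → ℂ) : ℝ :=
  ∑' n : ℤ, (1 + (2 * Real.pi * n) ^ 2) ^ m * ‖fourierC u n‖ ^ 2

/-- Squared `ν`-dependent Sobolev norm `‖u‖²_{H^m_ν} = ∑_{ξ∈2πℤ} |⟨ξ/ν⟩^m û(ξ)|²`. -/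
def sobNuNormSq (m : ℕ) (ν : ℤ) (u : ℝ → ℂ) : ℝ :=
  ∑' n : ℤ, (1 + (2 * Real.pi * n / ν) ^ 2) ^ m * ‖fourierC u n‖ ^ 2

/-- Smooth functions on the circle, viewed as smooth 1-periodic functions on `ℝ`. -/
def SmoothPeriodic (u : ℝ → ℂ) : Prop :=
  ContDiff ℝ (⊤ : ℕ∞) u ∧ Function.Periodic u 1

/-- Membership in `H^m(S¹)`, via summability of the Sobolev series. -/
def sobInH (m : ℕ) (u : ℝ → ℂ) : Prop :=
  Summable fun n : ℤ => (1 + (2 * Real.pi * n) ^ 2) ^ m * ‖fourierC u n‖ ^ 2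

/-- Operator norm on `H^m(S¹)` (computed over the dense subspace of smooth functions). -/
def opNormH (m : ℕ) (T : (ℝ → ℂ) → ℝ → ℂ) : ℝ :=
  ⨆ φ : {φ : ℝ → ℂ // SmoothPeriodic φ ∧ sobNormSq m φ ≤ 1}, Real.sqrt (sobNormSq m (T φ.1))

/-- Index of compactness (ball measure of noncompactness) of an operator on `H^m(S¹)`. -/
def icNormH (m : ℕ) (T : (ℝ → ℂ) → ℝ → ℂ) : ℝ :=
  sInf {r : ℝ | 0 < r ∧ ∃ s : Finset (ℝ → ℂ), ∀ φ : ℝ → ℂ, SmoothPeriodic φ → sobNormSq m φ ≤ 1 →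
    ∃ v ∈ s, Real.sqrt (sobNormSq m fun x => T φ x - v x) ≤ r}

/-! ## Canonical maps on the cotangent bundle and trajectory counts -/

/-- The canonical map `F_j : (y,η) ↦ (x_j, E'(x_j)η + τ'(x_j))`, where
`x_j = g^{-1}((y+j)/k) = E^{-1}(y+j)` on lifts. -/
def canMap (E τ : ℝ → ℝ) (j : ℕ) (p : ℝ × ℝ) : ℝ × ℝ :=
  (Function.invFun E (p.1 + j),
    deriv E (Function.invFun E (p.1 + j)) * p.2 + deriv τ (Function.invFun E (p.1 + j)))

/-- Random trajectory branch `F_α^{(n)}(ω) = F_{α_n}(ω) ∘ F_{α_{n-1}}(θω) ∘ ⋯ ∘ F_{α_1}(θ^{n-1}ω)`. -/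
def canTraj (θ : Ω → Ω) (E τ : Ω → ℝ → ℝ) : (n : ℕ) → (Fin n → ℕ) → Ω → ℝ × ℝ → ℝ × ℝ
  | 0, _, _, p => p
  | n + 1, α, ω, p =>
      canMap (E ω) (τ ω) (α (Fin.last n)) (canTraj θ E τ n (fun i => α i.castSucc) (θ ω) p)

/-- Number of branches issued from `p` which lie in `Z = S¹ × [-R,R]` at time `n`. -/
def trajCount (k : ℕ) (θ : Ω → Ω) (E τ : Ω → ℝ → ℝ) (R : ℝ) (n : ℕ) (ω : Ω) (p : ℝ × ℝ) : ℕ :=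
  Nat.card {α : Fin n → Fin k // |(canTraj θ E τ n (fun i => (α i : ℕ)) ω p).2| ≤ R}

/-- `N(ε;ω,n)`: the maximal number of non-escaping branches over starting points in `Z`. -/
def Ncount (k : ℕ) (θ : Ω → Ω) (E τ : Ω → ℝ → ℝ) (R : ℝ) (n : ℕ) (ω : Ω) : ℕ :=
  sSup {c : ℕ | ∃ p : ℝ × ℝ, |p.2| ≤ R ∧ trajCount k θ E τ R n ω p = c}

/-- Deterministic (unperturbed) non-escaping branch count `N(0;n)`. -/
def NcountD (k : ℕ) (E₀ τ₀ : ℝ → ℝ) (R : ℝ) (n : ℕ) : ℕ :=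
  Ncount k (id : Unit → Unit) (fun _ => E₀) (fun _ => τ₀) R n ()

/-- Partial captivity of the unperturbed map: `lim (1/n) log N(0;n) = 0`. -/
def PartiallyCaptive (k : ℕ) (E₀ τ₀ : ℝ → ℝ) (R : ℝ) : Prop :=
  Tendsto (fun n : ℕ => Real.log (NcountD k E₀ τ₀ R n) / n) atTop (nhds 0)

/-! ## Lifted dynamics, the invariant section `S`, and the trapped counts `Ñ` -/

/-- Backward cocycle `G^{(n)}(ω) = G(ω) ∘ G(θω) ∘ ⋯ ∘ G(θ^{n-1}ω)`, `G(ω) = E(ω)^{-1}`. -/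
def iterG (θ : Ω → Ω) (E : Ω → ℝ → ℝ) : ℕ → Ω → ℝ → ℝ
  | 0, _, x => x
  | n + 1, ω, x => Function.invFun (E ω) (iterG θ E n (θ ω) x)

/-- The lifted dynamics `F̃(ε;ω) : (y,η) ↦ (x, E'(ω,x)η + τ'(ω,x))` with `x = E(ω)^{-1}(y)`. -/
def liftF (E τ : ℝ → ℝ) (p : ℝ × ℝ) : ℝ × ℝ :=
  (Function.invFun E p.1,
    deriv E (Function.invFun E p.1) * p.2 + deriv τ (Function.invFun E p.1))

/-- Backward cocycle `F̃^{(n)}(ε;ω) = F̃(ε;ω) ∘ F̃(ε;θω) ∘ ⋯ ∘ F̃(ε;θ^{n-1}ω)`. -/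
def iterLiftF (θ : Ω → Ω) (E τ : Ω → ℝ → ℝ) : ℕ → Ω → ℝ × ℝ → ℝ × ℝ
  | 0, _, p => p
  | n + 1, ω, p => liftF (E ω) (τ ω) (iterLiftF θ E τ n (θ ω) p)

/-- `S_ε(ω,x) = -∑_{j≥1} τ'(θ^{-j}ω, G^{(j)}(θ^{-j}ω,x)) ⋅ dG^{(j)}(θ^{-j}ω,x)/dx`. -/
def stableS (θ θinv : Ω → Ω) (E τ : Ω → ℝ → ℝ) (ω : Ω) (x : ℝ) : ℝ :=
  -∑' j : ℕ,
    deriv (τ (θinv^[j + 1] ω)) (iterG θ E (j + 1) (θinv^[j + 1] ω) x)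
      * deriv (fun y => iterG θ E (j + 1) (θinv^[j + 1] ω) y) x

/-- Cardinality of `Ã_R(ε;ω,n)(y,η)`. -/
def tilACard (k : ℕ) (θ θinv : Ω → Ω) (E τ : Ω → ℝ → ℝ) (R : ℝ) (n : ℕ) (ω : Ω)
    (p : ℝ × ℝ) : ℕ :=
  Nat.card {a : Fin (k ^ n) //
    |p.2 - stableS θ θinv E τ (θ^[n] ω) (p.1 + ((a : ℕ) : ℝ))|
      ≤ R * deriv (fun y => iterG θ E n ω y) (p.1 + ((a : ℕ) : ℝ))}

/-- `Ñ_R(ε;ω,n) = sup_{(y,η)∈ℝ²} #Ã_R(ε;ω,n)(y,η)`. -/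
def tilN (k : ℕ) (θ θinv : Ω → Ω) (E τ : Ω → ℝ → ℝ) (R : ℝ) (n : ℕ) (ω : Ω) : ℕ :=
  sSup {c : ℕ | ∃ p : ℝ × ℝ, tilACard k θ θinv E τ R n ω p = c}

/-- Deterministic (unperturbed) version `Ñ_R(0;n)`. -/
def tilND (k : ℕ) (E₀ τ₀ : ℝ → ℝ) (R : ℝ) (n : ℕ) : ℕ :=
  tilN k (id : Unit → Unit) id (fun _ => E₀) (fun _ => τ₀) R n ()

/-! ## Correlation functions -/

/-- Quenched operational correlation function
`Cor^{op}_{φ,ψ}(ω,n) = ∫ φ∘f^{(n)}(ω)·ψ̄ dxds - ∫ φ dμ_{θⁿω} ∫ ψ̄ dxds`,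
where `dμ_ω = h(ω,x) dxds`. -/
def corOp (θ : Ω → Ω) (E τ : Ω → ℝ → ℝ) (h : Ω → ℝ → ℝ) (φ ψ : T2 → ℂ) (ω : Ω) (n : ℕ) : ℂ :=
  (∫ z : T2, φ (iterSkew θ E τ n ω z) * starRingEnd ℂ (ψ z))
    - (∫ z : T2, φ z * (h (θ^[n] ω) (lift01 z.1) : ℂ)) * ∫ z : T2, starRingEnd ℂ (ψ z)

/-- Quenched classical correlation function
`Cor^{cl}_{φ,ψ}(ω,n) = ∫ φ∘f^{(n)}(ω)·ψ̄ dμ_ω - ∫ φ dμ_{θⁿω} ∫ ψ̄ dμ_ω`. -/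
def corCl (θ : Ω → Ω) (E τ : Ω → ℝ → ℝ) (h : Ω → ℝ → ℝ) (φ ψ : T2 → ℂ) (ω : Ω) (n : ℕ) : ℂ :=
  (∫ z : T2, φ (iterSkew θ E τ n ω z) * starRingEnd ℂ (ψ z) * (h ω (lift01 z.1) : ℂ))
    - (∫ z : T2, φ z * (h (θ^[n] ω) (lift01 z.1) : ℂ))
      * ∫ z : T2, starRingEnd ℂ (ψ z) * (h ω (lift01 z.1) : ℂ)

/-! ## Semiclassical pseudodifferential calculus on `S¹` -/

/-- Semiclassical (toroidal) quantization of a symbol. -/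
def quantize (h : ℝ) (a : ℝ → ℝ → ℂ) (u : ℝ → ℂ) (x : ℝ) : ℂ :=
  ∑' n : ℤ, a x (h * (2 * Real.pi * n)) * fourierC u n
    * Complex.exp ((2 * Real.pi * n * x) * Complex.I)

/-- Fourier multiplier with (real) weight `w`, semiclassical parameter `h`. -/
def multiplierOp (w : ℝ → ℝ) (h : ℝ) (u : ℝ → ℂ) (x : ℝ) : ℂ :=
  ∑' n : ℤ, (w (h * (2 * Real.pi * n)) : ℂ) * fourierC u n
    * Complex.exp ((2 * Real.pi * n * x) * Complex.I)

/-- Mixed derivative `∂_ξ^α D_x^β a` (up to a unimodular factor) of a symbol. -/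
def symDeriv (a : ℝ → ℝ → ℂ) (α β : ℕ) (x ξ : ℝ) : ℂ :=
  iteratedDeriv α (fun ξ' => iteratedDeriv β (fun x' => a x' ξ') x) ξ

/-- The symbol class `S^m(T^*(S¹))`: smooth, 1-periodic in `x`, with symbol estimates. -/
def IsSymbol (m : ℝ) (a : ℝ → ℝ → ℂ) : Prop :=
  ContDiff ℝ (⊤ : ℕ∞) (fun p : ℝ × ℝ => a p.1 p.2) ∧
  (∀ x ξ : ℝ, a (x + 1) ξ = a x ξ) ∧
  ∀ α β : ℕ, ∃ C : ℝ, ∀ x ξ : ℝ, ‖symDeriv a α β x ξ‖ ≤ C * (1 + |ξ|) ^ (m - (α : ℝ))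

/-- Condition (𝒜(m)) for a family of symbols depending on `(ε, ω, n, h)`: for every `ℓ`
there are `ε₀ > 0` (independent of `n`) and constants `C n` such that the `ℓ`-th symbol
semi-norms are a.s. bounded by `C n`, uniformly in `ε ∈ [0,ε₀)` and `0 < h ≤ 1`. -/
def CondA [MeasurableSpace Ω] (P : Measure Ω) (m : ℝ)
    (a : ℝ → Ω → ℕ → ℝ → ℝ → ℝ → ℂ) : Prop :=
  ∀ ℓ : ℕ, ∃ ε₀ : ℝ, 0 < ε₀ ∧ ∃ C : ℕ → ℝ,
    ∀ ε : ℝ, 0 ≤ ε → ε < ε₀ → ∀ n : ℕ, ∀ h : ℝ, 0 < h → h ≤ 1 →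
      ∀ᵐ ω ∂P, ∀ α β : ℕ, α + β ≤ ℓ →
        ∀ x ξ : ℝ, ‖symDeriv (a ε ω n h) α β x ξ‖ ≤ C n * (1 + |ξ|) ^ (m - (α : ℝ))

/-- Sup norm of a (complex) symbol over `T^*(S¹)`. -/
def supSym (a : ℝ → ℝ → ℂ) : ℝ := ⨆ x : ℝ, ⨆ ξ : ℝ, ‖a x ξ‖

/-- Sup norm of a real symbol over `T^*(S¹)`. -/
def supSymR (a : ℝ → ℝ → ℝ) : ℝ := ⨆ x : ℝ, ⨆ ξ : ℝ, |a x ξ|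

/-- Squared `L²(S¹)` norm. -/
def l2NormSq (u : ℝ → ℂ) : ℝ := ∫ x in (0:ℝ)..1, ‖u x‖ ^ 2

/-- `L²(S¹)` inner product. -/
def l2Inner (u v : ℝ → ℂ) : ℂ := ∫ x in (0:ℝ)..1, u x * starRingEnd ℂ (v x)

/-- The principal symbol
`p_n(ω,y,η) = ∑_α (a_m²(y,η)/a_m²(F_α^{(n)}(ω,y,η))) ⋅ dG_α^{(n)}(ω,y)/dy`. -/
def pSym (k : ℕ) (θ : Ω → Ω) (E τ : Ω → ℝ → ℝ) (am : ℝ → ℝ) (n : ℕ) (ω : Ω)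
    (y η : ℝ) : ℝ :=
  ∑ α : Fin n → Fin k,
    (am η) ^ 2 / (am (canTraj θ E τ n (fun i => (α i : ℕ)) ω (y, η)).2) ^ 2
      * deriv (fun y' => (canTraj θ E τ n (fun i => (α i : ℕ)) ω (y', η)).1) y

/-- `P_n(ω) = (Q_{ν,n}(ω))^* Q_{ν,n}(ω) = A_m M*_{ν,n}(ω) A_m^{-2} M_{ν,n}(ω) A_m`,
where `A_m = a_m(hD)` and `h = 1/ν`. -/
def Pop (k : ℕ) (θ : Ω → Ω) (E τ : Ω → ℝ → ℝ) (am : ℝ → ℝ) (ν : ℤ) (n : ℕ) (ω : Ω)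
    (u : ℝ → ℂ) : ℝ → ℂ :=
  multiplierOp am (1 / (ν : ℝ)) <|
    transferStar k θ E τ ν n ω <|
      multiplierOp (fun ξ => ((am ξ) ^ 2)⁻¹) (1 / (ν : ℝ)) <|
        transferM θ E τ ν n ω <|
          multiplierOp am (1 / (ν : ℝ)) u

/-- `Q_{ν,n}(ω) = A_m^{-1} M_{ν,n}(ω) A_m`. -/
def Qop (k : ℕ) (θ : Ω → Ω) (E τ : Ω → ℝ → ℝ) (am : ℝ → ℝ) (ν : ℤ) (n : ℕ) (ω : Ω)
    (u : ℝ → ℂ) : ℝ → ℂ :=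
  multiplierOp (fun ξ => (am ξ)⁻¹) (1 / (ν : ℝ)) <|
    transferM θ E τ ν n ω <|
      multiplierOp am (1 / (ν : ℝ)) u

/-! ## Transversality (linear base) -/

/-- Jacobian of the skew product over the linear expanding map, at a point of the circle. -/
def jac1 (k : ℕ) (τ₀ : ℝ → ℝ) (x : S1) : Matrix (Fin 2) (Fin 2) ℝ :=
  !![(k : ℝ), 0; deriv τ₀ (lift01 x) / (2 * Real.pi), 1]

/-- Jacobian `Df₀ⁿ` of the iterated skew product (it depends only on the base point). -/
def jacN (k : ℕ) (τ₀ : ℝ → ℝ) : ℕ → S1 → Matrix (Fin 2) (Fin 2) ℝ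
  | 0, _ => 1
  | n + 1, x => jacN k τ₀ n (circMap (fun t => (k : ℝ) * t) x) * jac1 k τ₀ x

/-- A `2×2` matrix acting on `ℝ²`. -/
def mulVec2 (M : Matrix (Fin 2) (Fin 2) ℝ) (p : ℝ × ℝ) : ℝ × ℝ :=
  (M 0 0 * p.1 + M 0 1 * p.2, M 1 0 * p.1 + M 1 1 * p.2)

/-- The cone `𝒦_t = {(ξ,η) : |η| ≤ t|ξ|}`. -/
def cone (t : ℝ) : Set (ℝ × ℝ) := {p | |p.2| ≤ t * |p.1|}

/-- Transversality `ζ ⋔ w`: the images of the cone `𝒦_R` (with `ϑ_R = R/(λ₀-1)`, `λ₀ = k`)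
under `Df₀ⁿ(ζ)` and `Df₀ⁿ(w)` meet only at `0`. -/
def Transversal (k : ℕ) (τ₀ : ℝ → ℝ) (R : ℝ) (n : ℕ) (ζ w : T2) : Prop :=
  mulVec2 (jacN k τ₀ n ζ.1) '' cone (R / ((k : ℝ) - 1)) ∩
    mulVec2 (jacN k τ₀ n w.1) '' cone (R / ((k : ℝ) - 1)) ⊆ {((0:ℝ), (0:ℝ))}

/-- The skew product with linear base `f₀(x,s) = (kx mod 1, s + τ₀(x)/(2π) mod 1)`. -/
def skewD (k : ℕ) (τ₀ : ℝ → ℝ) : T2 → T2 := skewMap (fun x => (k : ℝ) * x) τ₀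

/-- `#{w ∈ f₀^{-n}(z) : w not transversal to ζ}`. -/
def notTransCount (k : ℕ) (τ₀ : ℝ → ℝ) (R : ℝ) (n : ℕ) (z ζ : T2) : ℕ :=
  Nat.card {w : T2 // (skewD k τ₀)^[n] w = z ∧ ¬ Transversal k τ₀ R n ζ w}

/-- `kⁿ φ_R(n) = sup_z sup_{ζ∈f₀^{-n}(z)} #{w ∈ f₀^{-n}(z) : w ⋔̸ ζ}`. -/
def phiCount (k : ℕ) (τ₀ : ℝ → ℝ) (R : ℝ) (n : ℕ) : ℕ :=
  sSup {c : ℕ | ∃ z ζ : T2, (skewD k τ₀)^[n] ζ = z ∧ notTransCount k τ₀ R n z ζ = c}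

/-- `φ_R(n) = k^{-n} sup_z sup_{ζ∈f₀^{-n}(z)} #{w ∈ f₀^{-n}(z) : w ⋔̸ ζ}`. -/
def phiR (k : ℕ) (τ₀ : ℝ → ℝ) (R : ℝ) (n : ℕ) : ℝ :=
  (phiCount k τ₀ R n : ℝ) / (k : ℝ) ^ n

/-! ## The spaces `C^m(S¹)` -/

/-- The space `C^m(S¹)` of `C^m` (`m ≤ ∞`) 1-periodic real functions. -/
def CmSpace (m : ℕ∞) : Type := {τ : ℝ → ℝ // ContDiff ℝ m τ ∧ Function.Periodic τ 1}

/-- The `C^m` topology: uniform convergence of all derivatives of order `≤ m`. -/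
instance (m : ℕ∞) : TopologicalSpace (CmSpace m) :=
  TopologicalSpace.induced
    (fun τ => fun j : {j : ℕ // (j : ℕ∞) ≤ m} => UniformFun.ofFun (iteratedDeriv j.1 τ.1))
    inferInstance

/-- Partial captivity of `f₀(x,s) = (kx mod 1, s + τ₀(x)/(2π) mod 1)` (linear base), with the
canonical choice `Z = S¹ × [-R_κ,R_κ]`, `κ = (λ+1)/2`, `λ = (k+1)/2`,
`R_κ = sup|τ₀'|/(λ-κ) = 4 sup|τ₀'|/(k-1)`. -/
def PartCaptLin (k : ℕ) (τ₀ : ℝ → ℝ) : Prop :=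
  PartiallyCaptive k (fun x => (k : ℝ) * x) τ₀ ((⨆ x : ℝ, |deriv τ₀ x|) * 4 / ((k : ℝ) - 1))

/-! ## Auxiliary lemmas for STATEMENT 19 -/

section Stmt19Aux

variable {f : ℝ → ℝ} {lam : ℝ}

lemma aux19_strictMono (hlam : 0 < lam) (hd : ∀ x, lam ≤ deriv f x) : StrictMono f :=
  strictMono_of_deriv_pos fun x => lt_of_lt_of_le hlam (hd x)

lemma aux19_surj (hf : Differentiable ℝ f) (hlam : 0 < lam) (hd : ∀ x, lam ≤ deriv f x) :
    Function.Surjective f := by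
  have hg : Monotone (fun x => f x - lam * x) := by
    apply monotone_of_deriv_nonneg (hf.sub ((differentiable_id.const_mul lam : Differentiable ℝ fun y : ℝ => lam * y)))
    intro x
    have h1 : HasDerivAt (fun y : ℝ => f y - lam * y) (deriv f x - lam * 1) x :=
      (hf x).hasDerivAt.sub ((hasDerivAt_id x).const_mul lam)
    have h2 : deriv (f - fun y => lam * y) x = deriv f x - lam * 1 := h1.deriv
    rw [h2]
    linarith [hd x]
  have hup : ∀ x : ℝ, 0 ≤ x → f 0 + lam * x ≤ f x := by
    intro x hx
    have := hg (by exact hx : (0:ℝ) ≤ x)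
    simp only [mul_zero] at this
    linarith
  have hlo : ∀ x : ℝ, x ≤ 0 → f x ≤ f 0 + lam * x := by
    intro x hx
    have := hg (by exact hx : x ≤ (0:ℝ))
    simp only [mul_zero] at this
    linarith
  apply (hf.continuous).surjective
  · apply tendsto_atTop_mono' atTop (_ : ∀ᶠ x in atTop, f 0 + lam * x ≤ f x)
    · exact tendsto_atTop_add_const_left _ _ ((tendsto_id.const_mul_atTop hlam))
    · filter_upwards [eventually_ge_atTop (0:ℝ)] with x hx using hup x hx
  · apply tendsto_atBot_mono' atBot (_ : ∀ᶠ x in atBot, f x ≤ f 0 + lam * x)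
    · exact tendsto_atBot_add_const_left _ _ ((tendsto_id.const_mul_atBot hlam))
    · filter_upwards [eventually_le_atBot (0:ℝ)] with x hx using hlo x hx

lemma aux19_rightInv (hf : Differentiable ℝ f) (hlam : 0 < lam) (hd : ∀ x, lam ≤ deriv f x)
    (y : ℝ) : f (Function.invFun f y) = y :=
  Function.rightInverse_invFun (aux19_surj hf hlam hd) y

lemma aux19_leftInv (hlam : 0 < lam) (hd : ∀ x, lam ≤ deriv f x)
    (x : ℝ) : Function.invFun f (f x) = x :=
  Function.leftInverse_invFun (aux19_strictMono hlam hd).injective x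

lemma aux19_contInv (hf : Differentiable ℝ f) (hlam : 0 < lam) (hd : ∀ x, lam ≤ deriv f x) :
    Continuous (Function.invFun f) := by
  have hmono := aux19_strictMono hlam hd
  have hsurj := aux19_surj hf hlam hd
  have heq : Function.invFun f = ⇑(StrictMono.orderIsoOfSurjective f hmono hsurj).symm := by
    funext y
    apply hmono.injective
    rw [aux19_rightInv hf hlam hd]
    exact (StrictMono.orderIsoOfSurjective_self_symm_apply f hmono hsurj y).symm
  rw [heq]
  exact OrderIso.continuous _

lemma aux19_invFun_hasDerivAt (hf : Differentiable ℝ f) (hlam : 0 < lam)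
    (hd : ∀ x, lam ≤ deriv f x) (y : ℝ) :
    HasDerivAt (Function.invFun f) (deriv f (Function.invFun f y))⁻¹ y := by
  apply HasDerivAt.of_local_left_inverse
    ((aux19_contInv hf hlam hd).continuousAt)
    (hf _).hasDerivAt
    (ne_of_gt (lt_of_lt_of_le hlam (hd _)))
  exact Filter.Eventually.of_forall (aux19_rightInv hf hlam hd)

end Stmt19Aux

section Stmt19Cocycle

variable {Ω : Type*} {θ θinv : Ω → Ω} {E τ : Ω → ℝ → ℝ} {lam Cτ : ℝ} {Good : Ω → Prop}

lemma aux19_Good_iterate_inv (hGθi : ∀ ω, Good ω → Good (θinv ω)) {ω : Ω} (hG : Good ω) :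
    ∀ m : ℕ, Good (θinv^[m] ω) := by
  intro m
  induction m with
  | zero => exact hG
  | succ m ih => rw [Function.iterate_succ_apply']; exact hGθi _ ih

lemma aux19_iterG_hasDerivAt (hlam : 1 < lam)
    (hsm : ∀ ω, Differentiable ℝ (E ω))
    (hGθ : ∀ ω, Good ω → Good (θ ω))
    (hd : ∀ ω, Good ω → ∀ x, lam ≤ deriv (E ω) x) :
    ∀ (n : ℕ) (ω : Ω), Good ω → ∀ x : ℝ, ∃ d : ℝ,
      HasDerivAt (iterG θ E n ω) d x ∧ 0 < d ∧ d ≤ lam⁻¹ ^ n := by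
  intro n
  have hpos : (0:ℝ) < lam := lt_trans one_pos hlam
  induction n with
  | zero =>
    intro ω _ x
    exact ⟨1, hasDerivAt_id x, one_pos, by norm_num⟩
  | succ n ih =>
    intro ω hG x
    obtain ⟨d, hdvt, hd0, hdle⟩ := ih (θ ω) (hGθ ω hG) x
    have hinv := aux19_invFun_hasDerivAt (hsm ω) hpos (hd ω hG) (iterG θ E n (θ ω) x)
    set c := (deriv (E ω) (Function.invFun (E ω) (iterG θ E n (θ ω) x)))⁻¹ with hc
    have hcpos : 0 < c := inv_pos.mpr (lt_of_lt_of_le hpos (hd ω hG _))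
    have hcle : c ≤ lam⁻¹ := by
      apply inv_anti₀ hpos (hd ω hG _)
    refine ⟨c * d, ?_, mul_pos hcpos hd0, ?_⟩
    · exact hinv.comp x hdvt
    · calc c * d ≤ lam⁻¹ * lam⁻¹ ^ n :=
            mul_le_mul hcle hdle hd0.le (inv_nonneg.mpr hpos.le)
        _ = lam⁻¹ ^ (n + 1) := by rw [pow_succ]; ring

lemma aux19_iterG_deriv (hlam : 1 < lam)
    (hsm : ∀ ω, Differentiable ℝ (E ω))
    (hGθ : ∀ ω, Good ω → Good (θ ω))
    (hd : ∀ ω, Good ω → ∀ x, lam ≤ deriv (E ω) x)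
    (n : ℕ) (ω : Ω) (hG : Good ω) (x : ℝ) :
    HasDerivAt (iterG θ E n ω) (deriv (fun y => iterG θ E n ω y) x) x ∧
      0 < deriv (fun y => iterG θ E n ω y) x ∧
        deriv (fun y => iterG θ E n ω y) x ≤ lam⁻¹ ^ n := by
  obtain ⟨d, h, h0, hle⟩ := aux19_iterG_hasDerivAt hlam hsm hGθ hd n ω hG x
  have hdd : deriv (fun y => iterG θ E n ω y) x = d := h.deriv
  rw [hdd]
  exact ⟨h, h0, hle⟩

lemma aux19_iterG_snoc : ∀ (n : ℕ) (ω : Ω) (x : ℝ),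
    iterG θ E (n + 1) ω x = iterG θ E n ω (Function.invFun (E (θ^[n] ω)) x) := by
  intro n
  induction n with
  | zero => intro ω x; rfl
  | succ n ih =>
    intro ω x
    show Function.invFun (E ω) (iterG θ E (n + 1) (θ ω) x) = _
    rw [ih (θ ω) x, ← Function.iterate_succ_apply]
    rfl

lemma aux19_geom_summable (hlam : 1 < lam) (Cτ : ℝ) :
    Summable (fun j : ℕ => Cτ * lam⁻¹ ^ (j + 1)) := by
  have hpos : (0:ℝ) < lam := lt_trans one_pos hlam
  have h := summable_geometric_of_lt_one (inv_nonneg.mpr hpos.le) (inv_lt_one_of_one_lt₀ hlam)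
  exact ((h.mul_right lam⁻¹).mul_left Cτ).congr fun j => by rw [pow_succ]

lemma aux19_term_bound (hlam : 1 < lam) (hCτ : 0 ≤ Cτ)
    (hsm : ∀ ω, Differentiable ℝ (E ω))
    (hGθ : ∀ ω, Good ω → Good (θ ω))
    (hGθi : ∀ ω, Good ω → Good (θinv ω))
    (hd : ∀ ω, Good ω → ∀ x, lam ≤ deriv (E ω) x)
    (hτd : ∀ ω, Good ω → ∀ x, |deriv (τ ω) x| ≤ Cτ)
    {ω : Ω} (hG : Good ω) (j : ℕ) (x : ℝ) :
    |deriv (τ (θinv^[j + 1] ω)) (iterG θ E (j + 1) (θinv^[j + 1] ω) x)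
        * deriv (fun y => iterG θ E (j + 1) (θinv^[j + 1] ω) y) x|
      ≤ Cτ * lam⁻¹ ^ (j + 1) := by
  have hGi : Good (θinv^[j + 1] ω) := aux19_Good_iterate_inv hGθi hG (j + 1)
  obtain ⟨_, h0, hle⟩ := aux19_iterG_deriv hlam hsm hGθ hd (j + 1) (θinv^[j + 1] ω) hGi x
  rw [abs_mul, abs_of_pos h0]
  exact mul_le_mul (hτd _ hGi _) hle h0.le hCτ

lemma aux19_term_summable (hlam : 1 < lam) (hCτ : 0 ≤ Cτ)
    (hsm : ∀ ω, Differentiable ℝ (E ω))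
    (hGθ : ∀ ω, Good ω → Good (θ ω))
    (hGθi : ∀ ω, Good ω → Good (θinv ω))
    (hd : ∀ ω, Good ω → ∀ x, lam ≤ deriv (E ω) x)
    (hτd : ∀ ω, Good ω → ∀ x, |deriv (τ ω) x| ≤ Cτ)
    {ω : Ω} (hG : Good ω) (x : ℝ) :
    Summable (fun j : ℕ =>
      deriv (τ (θinv^[j + 1] ω)) (iterG θ E (j + 1) (θinv^[j + 1] ω) x)
        * deriv (fun y => iterG θ E (j + 1) (θinv^[j + 1] ω) y) x) := by
  apply Summable.of_norm_bounded (aux19_geom_summable hlam Cτ)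
  intro j
  rw [Real.norm_eq_abs]
  exact aux19_term_bound hlam hCτ hsm hGθ hGθi hd hτd hG j x

lemma aux19_coh (hlam : 1 < lam) (hCτ : 0 ≤ Cτ)
    (hθ1 : Function.LeftInverse θinv θ)
    (hθ2 : Function.RightInverse θinv θ)
    (hsm : ∀ ω, Differentiable ℝ (E ω))
    (hGθ : ∀ ω, Good ω → Good (θ ω))
    (hGθi : ∀ ω, Good ω → Good (θinv ω))
    (hd : ∀ ω, Good ω → ∀ x, lam ≤ deriv (E ω) x)
    (hτd : ∀ ω, Good ω → ∀ x, |deriv (τ ω) x| ≤ Cτ)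
    {ω : Ω} (hG : Good ω) (x : ℝ) :
    stableS θ θinv E τ ω (Function.invFun (E ω) x)
      = deriv (E ω) (Function.invFun (E ω) x) * stableS θ θinv E τ (θ ω) x
        + deriv (τ ω) (Function.invFun (E ω) x) := by
  have hpos : (0:ℝ) < lam := lt_trans one_pos hlam
  set y := Function.invFun (E ω) x with hy
  set B := deriv (E ω) y with hB
  have hBpos : 0 < B := lt_of_lt_of_le hpos (hd ω hG y)
  set v : ℕ → ℝ := fun j =>
    deriv (τ (θinv^[j + 1] ω)) (iterG θ E (j + 1) (θinv^[j + 1] ω) y)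
      * deriv (fun z => iterG θ E (j + 1) (θinv^[j + 1] ω) z) y with hv
  set w : ℕ → ℝ := fun j =>
    deriv (τ (θinv^[j + 1] (θ ω))) (iterG θ E (j + 1) (θinv^[j + 1] (θ ω)) x)
      * deriv (fun z => iterG θ E (j + 1) (θinv^[j + 1] (θ ω)) z) x with hw
  have hshift : ∀ j : ℕ, θinv^[j + 1] (θ ω) = θinv^[j] ω := fun j => by
    rw [Function.iterate_succ_apply, hθ1 ω]
  have hBinv : HasDerivAt (fun z : ℝ => Function.invFun (E ω) z) B⁻¹ x :=
    aux19_invFun_hasDerivAt (hsm ω) hpos (hd ω hG) x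
  -- the `j = 0` term of `w`
  have hw0 : w 0 = deriv (τ ω) y * B⁻¹ := by
    have h1 : θinv^[0 + 1] (θ ω) = ω := hshift 0
    have e0 : (fun z => iterG θ E (0 + 1) ω z) = fun z : ℝ => Function.invFun (E ω) z := rfl
    have e1 : iterG θ E (0 + 1) ω x = y := rfl
    rw [hw]
    simp only [h1, e0, e1, hBinv.deriv]
  -- the shifted terms of `w`
  have hwj : ∀ j : ℕ, w (j + 1) = v j * B⁻¹ := by
    intro j
    have h1 : θinv^[j + 1 + 1] (θ ω) = θinv^[j + 1] ω := hshift (j + 1)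
    set ω' := θinv^[j + 1] ω with hω'
    have hGω' : Good ω' := aux19_Good_iterate_inv hGθi hG (j + 1)
    have hθiter : θ^[j + 1] ω' = ω := hθ2.iterate (j + 1) ω
    have hcomp_fun : (fun z => iterG θ E (j + 1 + 1) ω' z)
        = fun z : ℝ => iterG θ E (j + 1) ω' (Function.invFun (E ω) z) := by
      funext z
      rw [aux19_iterG_snoc (j + 1) ω' z, hθiter]
    have houter := (aux19_iterG_deriv hlam hsm hGθ hd (j + 1) ω' hGω' y).1
    have hder : deriv (fun z => iterG θ E (j + 1 + 1) ω' z) x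
        = deriv (fun z => iterG θ E (j + 1) ω' z) y * B⁻¹ := by
      rw [hcomp_fun]
      exact (houter.comp x hBinv).deriv
    have hval : iterG θ E (j + 1 + 1) ω' x = iterG θ E (j + 1) ω' y := by
      have := congrFun hcomp_fun x
      simpa using this
    rw [hw, hv]
    simp only [h1, ← hω', hder, hval]
    ring
  have hsv : Summable v := aux19_term_summable hlam hCτ hsm hGθ hGθi hd hτd hG y
  have hsw : Summable w := aux19_term_summable hlam hCτ hsm hGθ hGθi hd hτd (hGθ ω hG) x
  have hSω : stableS θ θinv E τ ω y = -∑' j, v j := rfl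
  have hSθω : stableS θ θinv E τ (θ ω) x = -∑' j, w j := rfl
  have h2 : ∑' j : ℕ, w (j + 1) = (∑' j, v j) * B⁻¹ := by
    rw [tsum_congr hwj, tsum_mul_right]
  rw [hSω, hSθω, hsw.tsum_eq_zero_add, hw0, h2]
  have hBne : B ≠ 0 := ne_of_gt hBpos
  field_simp
  ring

lemma aux19_bound (hlam : 1 < lam) (hCτ : 0 ≤ Cτ)
    (hsm : ∀ ω, Differentiable ℝ (E ω))
    (hGθ : ∀ ω, Good ω → Good (θ ω))
    (hGθi : ∀ ω, Good ω → Good (θinv ω))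
    (hd : ∀ ω, Good ω → ∀ x, lam ≤ deriv (E ω) x)
    (hτd : ∀ ω, Good ω → ∀ x, |deriv (τ ω) x| ≤ Cτ)
    {ω : Ω} (hG : Good ω) (x : ℝ) :
    |stableS θ θinv E τ ω x| ≤ Cτ * ∑' j : ℕ, (1 / lam) ^ (j + 1) := by
  set v : ℕ → ℝ := fun j =>
    deriv (τ (θinv^[j + 1] ω)) (iterG θ E (j + 1) (θinv^[j + 1] ω) x)
      * deriv (fun z => iterG θ E (j + 1) (θinv^[j + 1] ω) z) x with hv
  have hS : stableS θ θinv E τ ω x = -∑' j, v j := rfl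
  have hb : ∀ j : ℕ, ‖v j‖ ≤ Cτ * lam⁻¹ ^ (j + 1) := fun j => by
    rw [Real.norm_eq_abs]
    exact aux19_term_bound hlam hCτ hsm hGθ hGθi hd hτd hG j x
  have hsn : Summable fun j => ‖v j‖ :=
    Summable.of_nonneg_of_le (fun j => norm_nonneg _) hb (aux19_geom_summable hlam Cτ)
  have h1 : |∑' j, v j| ≤ ∑' j : ℕ, Cτ * lam⁻¹ ^ (j + 1) := by
    rw [← Real.norm_eq_abs]
    exact (norm_tsum_le_tsum_norm hsn).trans
      (Summable.tsum_le_tsum hb hsn (aux19_geom_summable hlam Cτ))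
  rw [hS, abs_neg]
  calc |∑' j, v j| ≤ ∑' j : ℕ, Cτ * lam⁻¹ ^ (j + 1) := h1
    _ = Cτ * ∑' j : ℕ, (1 / lam) ^ (j + 1) := by rw [tsum_mul_left]; simp [one_div]

lemma aux19_unif (hlam : 1 < lam) (hCτ : 0 ≤ Cτ)
    (hsm : ∀ ω, Differentiable ℝ (E ω))
    (hGθ : ∀ ω, Good ω → Good (θ ω))
    (hGθi : ∀ ω, Good ω → Good (θinv ω))
    (hd : ∀ ω, Good ω → ∀ x, lam ≤ deriv (E ω) x)
    (hτd : ∀ ω, Good ω → ∀ x, |deriv (τ ω) x| ≤ Cτ)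
    {ω : Ω} (hG : Good ω) :
    TendstoUniformly
      (fun N : ℕ => fun x : ℝ => -(∑ j ∈ Finset.range N,
        deriv (τ (θinv^[j + 1] ω)) (iterG θ E (j + 1) (θinv^[j + 1] ω) x)
          * deriv (fun y => iterG θ E (j + 1) (θinv^[j + 1] ω) y) x))
      (stableS θ θinv E τ ω) atTop := by
  have h := tendstoUniformly_tsum_nat (f := fun (j : ℕ) (x : ℝ) =>
      -(deriv (τ (θinv^[j + 1] ω)) (iterG θ E (j + 1) (θinv^[j + 1] ω) x)
          * deriv (fun y => iterG θ E (j + 1) (θinv^[j + 1] ω) y) x))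
      (aux19_geom_summable hlam Cτ) (fun j x => by
        rw [norm_neg, Real.norm_eq_abs]
        exact aux19_term_bound hlam hCτ hsm hGθ hGθi hd hτd hG j x)
  have e1 : (fun N : ℕ => fun x : ℝ => ∑ j ∈ Finset.range N,
      -(deriv (τ (θinv^[j + 1] ω)) (iterG θ E (j + 1) (θinv^[j + 1] ω) x)
          * deriv (fun y => iterG θ E (j + 1) (θinv^[j + 1] ω) y) x))
      = fun N : ℕ => fun x : ℝ => -(∑ j ∈ Finset.range N,
        deriv (τ (θinv^[j + 1] ω)) (iterG θ E (j + 1) (θinv^[j + 1] ω) x)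
          * deriv (fun y => iterG θ E (j + 1) (θinv^[j + 1] ω) y) x) := by
    funext N x
    rw [Finset.sum_neg_distrib]
  have e2 : (fun x : ℝ => ∑' j : ℕ,
      -(deriv (τ (θinv^[j + 1] ω)) (iterG θ E (j + 1) (θinv^[j + 1] ω) x)
          * deriv (fun y => iterG θ E (j + 1) (θinv^[j + 1] ω) y) x))
      = stableS θ θinv E τ ω := by
    funext x
    rw [tsum_neg]
    rfl
  rw [e1, e2] at h
  exact h

lemma aux19_lift (hlam : 1 < lam) (hCτ : 0 ≤ Cτ)
    (hθ1 : Function.LeftInverse θinv θ)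
    (hθ2 : Function.RightInverse θinv θ)
    (hsm : ∀ ω, Differentiable ℝ (E ω))
    (hGθ : ∀ ω, Good ω → Good (θ ω))
    (hGθi : ∀ ω, Good ω → Good (θinv ω))
    (hd : ∀ ω, Good ω → ∀ x, lam ≤ deriv (E ω) x)
    (hτd : ∀ ω, Good ω → ∀ x, |deriv (τ ω) x| ≤ Cτ) :
    ∀ (n : ℕ) (ω : Ω), Good ω → ∀ x : ℝ,
      iterLiftF θ E τ n ω (x, stableS θ θinv E τ (θ^[n] ω) x)
        = (iterG θ E n ω x, stableS θ θinv E τ ω (iterG θ E n ω x)) := by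
  intro n
  induction n with
  | zero => intro ω hG x; rfl
  | succ n ih =>
    intro ω hG x
    have h1 : θ^[n + 1] ω = θ^[n] (θ ω) := Function.iterate_succ_apply θ n ω
    show liftF (E ω) (τ ω)
        (iterLiftF θ E τ n (θ ω) (x, stableS θ θinv E τ (θ^[n + 1] ω) x)) = _
    rw [h1, ih (θ ω) (hGθ ω hG) x]
    have hc := aux19_coh hlam hCτ hθ1 hθ2 hsm hGθ hGθi hd hτd hG (iterG θ E n (θ ω) x)
    have h2 : iterG θ E (n + 1) ω x = Function.invFun (E ω) (iterG θ E n (θ ω) x) := rfl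
    simp only [liftF, h2]
    exact Prod.ext rfl hc.symm

/-- The pointwise "good" set on which all bounds hold along the full orbit. -/
def aux19Good (θ θinv : Ω → Ω) (E τ : Ω → ℝ → ℝ) (lam Cτ : ℝ) (ω : Ω) : Prop :=
  ∀ m : ℕ,
    ((∀ x, lam ≤ deriv (E (θ^[m] ω)) x) ∧ ∀ x, |deriv (τ (θ^[m] ω)) x| ≤ Cτ) ∧
    ((∀ x, lam ≤ deriv (E (θinv^[m] ω)) x) ∧ ∀ x, |deriv (τ (θinv^[m] ω)) x| ≤ Cτ)

lemma aux19Good_theta (hθ1 : Function.LeftInverse θinv θ) (ω : Ω)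
    (hG : aux19Good θ θinv E τ lam Cτ ω) : aux19Good θ θinv E τ lam Cτ (θ ω) := by
  intro m
  constructor
  · have := (hG (m + 1)).1
    rwa [Function.iterate_succ_apply] at this
  · cases m with
    | zero => simpa using (hG 1).1
    | succ m =>
      have := (hG m).2
      rw [Function.iterate_succ_apply, hθ1 ω]
      exact this

lemma aux19Good_thetaInv (hθ2 : Function.RightInverse θinv θ) (ω : Ω)
    (hG : aux19Good θ θinv E τ lam Cτ ω) : aux19Good θ θinv E τ lam Cτ (θinv ω) := by
  intro m
  constructor
  · cases m with
    | zero => simpa using (hG 1).2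
    | succ m =>
      have := (hG m).1
      rw [Function.iterate_succ_apply, hθ2 ω]
      exact this
  · have := (hG (m + 1)).2
    rwa [Function.iterate_succ_apply] at this

lemma aux19Good_d (ω : Ω) (hG : aux19Good θ θinv E τ lam Cτ ω) :
    ∀ x, lam ≤ deriv (E ω) x := (hG 0).1.1

lemma aux19Good_td (ω : Ω) (hG : aux19Good θ θinv E τ lam Cτ ω) :
    ∀ x, |deriv (τ ω) x| ≤ Cτ := (hG 0).1.2

end Stmt19Cocycle

theorem stmt19
    {Ω : Type*} [MeasurableSpace Ω]
    (k : ℕ) (hk : 2 ≤ k)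
    (P : Measure Ω) [IsProbabilityMeasure P]
    (θ : Ω → Ω) (hθ : MeasurePreserving θ P P)
    (θinv : Ω → Ω) (hθinv₁ : Function.LeftInverse θinv θ)
    (hθinv₂ : Function.RightInverse θinv θ) (hθinvmeas : Measurable θinv)
    (E τ : ℝ → Ω → ℝ → ℝ)
    (hEsmooth : ∀ ε ω, 0 ≤ ε → ContDiff ℝ (⊤ : ℕ∞) (E ε ω))
    (hElift : ∀ ε ω x, E ε ω (x + 1) = E ε ω x + k)
    (hτsmooth : ∀ ε ω, 0 ≤ ε → ContDiff ℝ (⊤ : ℕ∞) (τ ε ω))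
    (hτper : ∀ ε ω, Function.Periodic (τ ε ω) 1)
    (ε₀ lam : ℝ) (hε₀ : 0 < ε₀) (hlam : 1 < lam)
    (hexp : ∀ ε, 0 ≤ ε → ε < ε₀ → ∀ᵐ ω ∂P, ∀ x, lam ≤ deriv (E ε ω) x)
    (Cτ : ℝ) (hCτpos : 0 < Cτ)
    (hCτ : ∀ ε, 0 ≤ ε → ε < ε₀ → ∀ᵐ ω ∂P, ∀ x, |deriv (τ ε ω) x| ≤ Cτ) :
    ∀ ε, 0 ≤ ε → ε < ε₀ →
      (∀ᵐ ω ∂P, TendstoUniformly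
        (fun N : ℕ => fun x : ℝ => -(∑ j ∈ Finset.range N,
          deriv (τ ε (θinv^[j + 1] ω)) (iterG θ (E ε) (j + 1) (θinv^[j + 1] ω) x)
            * deriv (fun y => iterG θ (E ε) (j + 1) (θinv^[j + 1] ω) y) x))
        (stableS θ θinv (E ε) (τ ε) ω) atTop) ∧
      (∀ᵐ ω ∂P, ∀ x : ℝ,
        |stableS θ θinv (E ε) (τ ε) ω x| ≤ Cτ * ∑' j : ℕ, (1 / lam) ^ (j + 1)) ∧
      (∀ᵐ ω ∂P, ∀ x : ℝ,
        stableS θ θinv (E ε) (τ ε) ω (Function.invFun (E ε ω) x)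
          = deriv (E ε ω) (Function.invFun (E ε ω) x)
              * stableS θ θinv (E ε) (τ ε) (θ ω) x
            + deriv (τ ε ω) (Function.invFun (E ε ω) x)) ∧
      (∀ᵐ ω ∂P, ∀ n : ℕ, ∀ x : ℝ,
        iterLiftF θ (E ε) (τ ε) n ω (x, stableS θ θinv (E ε) (τ ε) (θ^[n] ω) x)
          = (iterG θ (E ε) n ω x,
              stableS θ θinv (E ε) (τ ε) ω (iterG θ (E ε) n ω x))) := by
  intro ε hε hεlt
  have hsm : ∀ ω, Differentiable ℝ (E ε ω) := fun ω =>
    (hEsmooth ε ω hε).differentiable (by simp)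
  have hGθ := fun ω => aux19Good_theta (θ := θ) (θinv := θinv) (E := E ε) (τ := τ ε)
    (lam := lam) (Cτ := Cτ) hθinv₁ ω
  have hGθi := fun ω => aux19Good_thetaInv (θ := θ) (θinv := θinv) (E := E ε) (τ := τ ε)
    (lam := lam) (Cτ := Cτ) hθinv₂ ω
  have hd := fun ω => aux19Good_d (θ := θ) (θinv := θinv) (E := E ε) (τ := τ ε)
    (lam := lam) (Cτ := Cτ) ω
  have hτd := fun ω => aux19Good_td (θ := θ) (θinv := θinv) (E := E ε) (τ := τ ε)
    (lam := lam) (Cτ := Cτ) ω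
  -- θinv is measure preserving
  have hθimp : MeasurePreserving θinv P P := by
    refine ⟨hθinvmeas, Measure.ext fun s hs => ?_⟩
    rw [Measure.map_apply hθinvmeas hs]
    have h2 : θ ⁻¹' (θinv ⁻¹' s) = s := by
      ext z
      simp [Set.mem_preimage, hθinv₁ z]
    calc P (θinv ⁻¹' s)
        = P (θ ⁻¹' (θinv ⁻¹' s)) :=
          (hθ.measure_preimage (hθinvmeas hs).nullMeasurableSet).symm
      _ = P s := by rw [h2]
  -- the good set has full measure
  have hA : ∀ᵐ ω ∂P, (∀ x, lam ≤ deriv (E ε ω) x) ∧ ∀ x, |deriv (τ ε ω) x| ≤ Cτ :=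
    (hexp ε hε hεlt).and (hCτ ε hε hεlt)
  have hGoodae : ∀ᵐ ω ∂P, aux19Good θ θinv (E ε) (τ ε) lam Cτ ω := by
    simp only [aux19Good]
    rw [MeasureTheory.ae_all_iff]
    intro m
    exact ((((hθ.iterate m).quasiMeasurePreserving).ae hA).and
      (((hθimp.iterate m).quasiMeasurePreserving).ae hA)).mono (fun ω h => ⟨h.1, h.2⟩)
  refine ⟨?_, ?_, ?_, ?_⟩
  · filter_upwards [hGoodae] with ω hG
    exact aux19_unif hlam hCτpos.le hsm hGθ hGθi hd hτd hG
  · filter_upwards [hGoodae] with ω hG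
    intro x
    exact aux19_bound hlam hCτpos.le hsm hGθ hGθi hd hτd hG x
  · filter_upwards [hGoodae] with ω hG
    intro x
    exact aux19_coh hlam hCτpos.le hθinv₁ hθinv₂ hsm hGθ hGθi hd hτd hG x
  · filter_upwards [hGoodae] with ω hG
    intro n x
    exact aux19_lift hlam hCτpos.le hθinv₁ hθinv₂ hsm hGθ hGθi hd hτd n ω hG x


end RPE
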